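/- (Theorem 1, bijection.) In a finite Dec-POMDP with hierarchical agent models, fix an agent i and the other agents' models N_{-i}, and let ρ_i be the AMM-occupancy measure induced by agent model N_i = (π_i, Tx_i) together with N_{-i}. Assume the marginals are strictly positive: ρ_i(o,x⁻) := ∑_{a,x} ρ_i(o,a,x,x⁻) > 0 for every (o,x⁻) ∈ Ω_i × (X_i ∪ {#}) and ρ_i(o,x) := ∑_{a,x⁻} ρ_i(o,a,x,x⁻) > 0 for every (o,x) ∈ Ω_i × X_i. Then the agent model is recovered from ρ_i by Tx_i(x|o,x⁻) = (∑_{a} ρ_i(o,a,x,x⁻)) / (∑_{a,x} ρ_i(o,a,x,x⁻)) and π_i(a|o,x) = (∑_{x⁻} ρ_i(o,a,x,x⁻)) / (∑_{x⁻,a} ρ_i(o,a,x,x⁻)); moreover, if another agent model N_i' = (π_i', Tx_i'), combined with the same other-agent models N_{-i}, induces the same AMM-occupancy measure ρ_i, then π_i' = π_i and Tx_i' = Tx_i. That is, N_i is the only agent model whose AMM-occupancy measure (given N_{-i}) is ρ_i. -/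
import Mathlib


open scoped BigOperators
open Classical

lemma sum_pi_ite_prod {n : ℕ} {Y : Fin n → Type} [∀ j, Fintype (Y j)]
    (g : ∀ j, Y j → ℝ) (i : Fin n) (y : Y i)
    (h1 : ∀ j, j ≠ i → ∑ z : Y j, g j z = 1) :
    ∑ f : (∀ j, Y j), (if f i = y then ∏ j, g j (f j) else 0) = g i y := by
  classical
  rw [← (Equiv.piSplitAt i Y).symm.sum_comp
    (fun f : (∀ j, Y j) => if f i = y then ∏ j, g j (f j) else 0)]
  rw [Fintype.sum_prod_type]
  have hfi : ∀ (b : Y i) (h : ∀ j : {j // j ≠ i}, Y j),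
      ((Equiv.piSplitAt i Y).symm (b, h)) i = b := by
    intro b h; simp [Equiv.piSplitAt]
  have hfj : ∀ (b : Y i) (h : ∀ j : {j // j ≠ i}, Y j) (j : {j // j ≠ i}),
      ((Equiv.piSplitAt i Y).symm (b, h)) j.1 = h j := by
    intro b h j; simp [Equiv.piSplitAt, j.2]
  rw [Finset.sum_eq_single y]
  · calc ∑ h : (∀ j : {j // j ≠ i}, Y j),
          (if ((Equiv.piSplitAt i Y).symm (y, h)) i = y
            then ∏ j, g j (((Equiv.piSplitAt i Y).symm (y, h)) j) else 0)
        = ∑ h : (∀ j : {j // j ≠ i}, Y j),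
            g i y * ∏ j : {j // j ≠ i}, g j.1 (h j) := by
          apply Finset.sum_congr rfl
          intro h _
          rw [if_pos (hfi y h)]
          rw [← Finset.mul_prod_erase Finset.univ
            (fun j => g j (((Equiv.piSplitAt i Y).symm (y, h)) j)) (Finset.mem_univ i),
            hfi y h]
          congr 1
          rw [Finset.prod_subtype (Finset.univ.erase i)
            (fun j => by simp [Finset.mem_erase] : ∀ j, j ∈ Finset.univ.erase i ↔ j ≠ i)
            (fun j => g j (((Equiv.piSplitAt i Y).symm (y, h)) j))]
          apply Finset.prod_congr rfl
          intro j _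
          exact congrArg (g j.1) (hfj y h j)
      _ = g i y := by
          rw [← Finset.mul_sum]
          have h2 : ∑ h : (∀ j : {j // j ≠ i}, Y j), ∏ j : {j // j ≠ i}, g j.1 (h j)
              = ∏ j : {j // j ≠ i}, ∑ z : Y j.1, g j.1 z := by
            rw [Finset.prod_univ_sum (fun j : {j // j ≠ i} => (Finset.univ : Finset (Y j.1)))
              (fun j z => g j.1 z), Fintype.piFinset_univ]
          rw [h2, Finset.prod_eq_one (fun j _ => h1 j.1 j.2), mul_one]
  · intro b _ hb
    apply Finset.sum_eq_zero
    intro h _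
    rw [if_neg]
    rw [hfi b h]
    exact hb
  · simp

section DecPOMDP

variable {n : ℕ} {S : Type} {A : Fin n → Type} {Ω : Fin n → Type} {X : Fin n → Type}

/-- The time-`t` joint distribution of the Dec-POMDP process with hierarchical agent
models, over tuples `(s^t, o^t, x^{t-1}, x^t, a^t)`; here `x^{-1} := #` is modelled by
`none`, as is the absent previous joint action at time `0`. The process is:
`s⁰ ~ μ0`, `o_i⁰ = O_i(s⁰,#)`, `x_i⁰ ~ Tx_i(·|o_i⁰,#)`, `a_i⁰ ~ π_i(·|o_i⁰,x_i⁰)`;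
and for `t ≥ 0`, `s^{t+1} ~ T(·|s^t,a^t)`, `o_i^{t+1} = O_i(s^{t+1},a^t)`,
`x_i^{t+1} ~ Tx_i(·|o_i^{t+1},x_i^t)`, `a_i^{t+1} ~ π_i(·|o_i^{t+1},x_i^{t+1})`,
independently across agents. -/
noncomputable def jointDist [Fintype S] [∀ i, Fintype (A i)] [∀ i, Fintype (Ω i)]
    [∀ i, Fintype (X i)]
    (T : S → (∀ i, A i) → S → ℝ) (μ0 : S → ℝ)
    (Obs : ∀ i, S → Option (∀ j, A j) → Ω i)
    (π : ∀ i, Ω i → X i → A i → ℝ)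
    (Tx : ∀ i, Ω i → Option (X i) → X i → ℝ) :
    ℕ → S → (∀ i, Ω i) → (∀ i, Option (X i)) → (∀ i, X i) → (∀ i, A i) → ℝ
  | 0, s, o, xp, x, a =>
      (μ0 s *
        (if (∀ i, o i = Obs i s none) ∧ xp = (fun _ => none) then (1 : ℝ) else 0)) *
      ((∏ i, Tx i (o i) (xp i) (x i)) * ∏ i, π i (o i) (x i) (a i))
  | (t + 1), s', o', xp', x', a' =>
      (∑ s : S, ∑ o : (∀ i, Ω i), ∑ xp : (∀ i, Option (X i)), ∑ x : (∀ i, X i),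
        ∑ a : (∀ i, A i),
          jointDist T μ0 Obs π Tx t s o xp x a * T s a s' *
            (if (∀ i, o' i = Obs i s' (some a)) ∧ xp' = (fun i => some (x i))
              then (1 : ℝ) else 0)) *
      ((∏ i, Tx i (o' i) (xp' i) (x' i)) * ∏ i, π i (o' i) (x' i) (a' i))

/-- The AMM-occupancy measure of agent `i`:
`ρ_i(o,a,x,x⁻) := ∑_{t=0}^∞ γ^t · P(o_i^t = o, a_i^t = a, x_i^t = x, x_i^{t-1} = x⁻)`,
with the convention `x_i^{-1} := #` (modelled by `none`). -/
noncomputable def occAMM [Fintype S] [∀ i, Fintype (A i)] [∀ i, Fintype (Ω i)]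
    [∀ i, Fintype (X i)]
    (T : S → (∀ i, A i) → S → ℝ) (μ0 : S → ℝ)
    (Obs : ∀ i, S → Option (∀ j, A j) → Ω i) (γ : ℝ)
    (π : ∀ i, Ω i → X i → A i → ℝ)
    (Tx : ∀ i, Ω i → Option (X i) → X i → ℝ)
    (i : Fin n) (o : Ω i) (a : A i) (x : X i) (xp : Option (X i)) : ℝ :=
  ∑' t : ℕ,
    γ ^ t *
      (∑ s : S, ∑ oj : (∀ j, Ω j), ∑ xpj : (∀ j, Option (X j)), ∑ xj : (∀ j, X j),
        ∑ aj : (∀ j, A j),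
          if oj i = o ∧ aj i = a ∧ xj i = x ∧ xpj i = xp
            then jointDist T μ0 Obs π Tx t s oj xpj xj aj else 0)


noncomputable def pref [Fintype S] [∀ i, Fintype (A i)] [∀ i, Fintype (Ω i)]
    [∀ i, Fintype (X i)]
    (T : S → (∀ i, A i) → S → ℝ) (μ0 : S → ℝ)
    (Obs : ∀ i, S → Option (∀ j, A j) → Ω i)
    (π : ∀ i, Ω i → X i → A i → ℝ)
    (Tx : ∀ i, Ω i → Option (X i) → X i → ℝ) :
    ℕ → S → (∀ i, Ω i) → (∀ i, Option (X i)) → ℝ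
  | 0, s, o, xp =>
      μ0 s * (if (∀ i, o i = Obs i s none) ∧ xp = (fun _ => none) then (1 : ℝ) else 0)
  | (t + 1), s', o', xp' =>
      ∑ s : S, ∑ o : (∀ i, Ω i), ∑ xp : (∀ i, Option (X i)), ∑ x : (∀ i, X i),
        ∑ a : (∀ i, A i),
          jointDist T μ0 Obs π Tx t s o xp x a * T s a s' *
            (if (∀ i, o' i = Obs i s' (some a)) ∧ xp' = (fun i => some (x i))
              then (1 : ℝ) else 0)

lemma jointDist_eq [Fintype S] [∀ i, Fintype (A i)] [∀ i, Fintype (Ω i)]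
    [∀ i, Fintype (X i)]
    (T : S → (∀ i, A i) → S → ℝ) (μ0 : S → ℝ)
    (Obs : ∀ i, S → Option (∀ j, A j) → Ω i)
    (π : ∀ i, Ω i → X i → A i → ℝ)
    (Tx : ∀ i, Ω i → Option (X i) → X i → ℝ)
    (t : ℕ) (s : S) (o : ∀ i, Ω i) (xp : ∀ i, Option (X i)) (x : ∀ i, X i)
    (a : ∀ i, A i) :
    jointDist T μ0 Obs π Tx t s o xp x a
      = pref T μ0 Obs π Tx t s o xp *
          ((∏ i, Tx i (o i) (xp i) (x i)) * ∏ i, π i (o i) (x i) (a i)) := by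
  cases t <;> rfl

noncomputable def mval [Fintype S] [∀ i, Fintype (A i)] [∀ i, Fintype (Ω i)]
    [∀ i, Fintype (X i)]
    (T : S → (∀ i, A i) → S → ℝ) (μ0 : S → ℝ)
    (Obs : ∀ i, S → Option (∀ j, A j) → Ω i) (γ : ℝ)
    (π : ∀ i, Ω i → X i → A i → ℝ)
    (Tx : ∀ i, Ω i → Option (X i) → X i → ℝ)
    (i : Fin n) (o : Ω i) (xp : Option (X i)) : ℝ :=
  ∑' t : ℕ, γ ^ t *
    (∑ s : S, ∑ oj : (∀ j, Ω j), ∑ xpj : (∀ j, Option (X j)),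
      if oj i = o ∧ xpj i = xp then pref T μ0 Obs π Tx t s oj xpj else 0)

lemma key_sum [Fintype S] [∀ i, Fintype (A i)] [∀ i, Fintype (Ω i)]
    [∀ i, Fintype (X i)]
    (T : S → (∀ i, A i) → S → ℝ) (μ0 : S → ℝ)
    (Obs : ∀ i, S → Option (∀ j, A j) → Ω i)
    (π : ∀ i, Ω i → X i → A i → ℝ)
    (Tx : ∀ i, Ω i → Option (X i) → X i → ℝ)
    (i : Fin n)
    (hπ : ∀ j, j ≠ i → ∀ o x, ∑ a : A j, π j o x a = 1)
    (hTx : ∀ j, j ≠ i → ∀ o xp, ∑ x : X j, Tx j o xp x = 1)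
    (o : Ω i) (a : A i) (x : X i) (xp : Option (X i)) (t : ℕ) :
    (∑ s : S, ∑ oj : (∀ j, Ω j), ∑ xpj : (∀ j, Option (X j)), ∑ xj : (∀ j, X j),
      ∑ aj : (∀ j, A j),
        if oj i = o ∧ aj i = a ∧ xj i = x ∧ xpj i = xp
          then jointDist T μ0 Obs π Tx t s oj xpj xj aj else 0)
    = (∑ s : S, ∑ oj : (∀ j, Ω j), ∑ xpj : (∀ j, Option (X j)),
        if oj i = o ∧ xpj i = xp then pref T μ0 Obs π Tx t s oj xpj else 0)
      * (Tx i o xp x * π i o x a) := by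
  rw [Finset.sum_mul]
  apply Finset.sum_congr rfl; intro s _
  rw [Finset.sum_mul]
  apply Finset.sum_congr rfl; intro oj _
  rw [Finset.sum_mul]
  apply Finset.sum_congr rfl; intro xpj _
  by_cases h : oj i = o ∧ xpj i = xp
  · obtain ⟨h1, h2⟩ := h
    rw [if_pos ⟨h1, h2⟩]
    calc (∑ xj : (∀ j, X j), ∑ aj : (∀ j, A j),
          if oj i = o ∧ aj i = a ∧ xj i = x ∧ xpj i = xp
            then jointDist T μ0 Obs π Tx t s oj xpj xj aj else 0)
        = ∑ xj : (∀ j, X j),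
            (if xj i = x then ∏ j, Tx j (oj j) (xpj j) (xj j) else 0) *
              (pref T μ0 Obs π Tx t s oj xpj * π i o x a) := by
          apply Finset.sum_congr rfl; intro xj _
          by_cases hx : xj i = x
          · rw [if_pos hx]
            calc (∑ aj : (∀ j, A j),
                  if oj i = o ∧ aj i = a ∧ xj i = x ∧ xpj i = xp
                    then jointDist T μ0 Obs π Tx t s oj xpj xj aj else 0)
                = ∑ aj : (∀ j, A j),
                    (if aj i = a then ∏ j, π j (oj j) (xj j) (aj j) else 0) *
                      (pref T μ0 Obs π Tx t s oj xpj *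
                        ∏ j, Tx j (oj j) (xpj j) (xj j)) := by
                  apply Finset.sum_congr rfl; intro aj _
                  by_cases ha : aj i = a
                  · rw [if_pos ⟨h1, ha, hx, h2⟩, if_pos ha, jointDist_eq]; ring
                  · rw [if_neg (by tauto), if_neg ha, zero_mul]
              _ = π i (oj i) (xj i) a *
                    (pref T μ0 Obs π Tx t s oj xpj *
                      ∏ j, Tx j (oj j) (xpj j) (xj j)) := by
                  rw [← Finset.sum_mul,
                    sum_pi_ite_prod (fun j z => π j (oj j) (xj j) z) i a
                      (fun j hj => hπ j hj (oj j) (xj j))]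
              _ = (∏ j, Tx j (oj j) (xpj j) (xj j)) *
                    (pref T μ0 Obs π Tx t s oj xpj * π i o x a) := by
                  rw [h1, hx]; ring
          · rw [if_neg hx, zero_mul]
            apply Finset.sum_eq_zero; intro aj _
            rw [if_neg (by tauto)]
      _ = (∑ xj : (∀ j, X j),
            if xj i = x then ∏ j, Tx j (oj j) (xpj j) (xj j) else 0) *
              (pref T μ0 Obs π Tx t s oj xpj * π i o x a) := by
          rw [Finset.sum_mul]
      _ = Tx i (oj i) (xpj i) x *
            (pref T μ0 Obs π Tx t s oj xpj * π i o x a) := by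
          rw [sum_pi_ite_prod (fun j z => Tx j (oj j) (xpj j) z) i x
            (fun j hj => hTx j hj (oj j) (xpj j))]
      _ = pref T μ0 Obs π Tx t s oj xpj * (Tx i o xp x * π i o x a) := by
          rw [h1, h2]; ring
  · rw [if_neg h, zero_mul]
    apply Finset.sum_eq_zero; intro xj _
    apply Finset.sum_eq_zero; intro aj _
    rw [if_neg (by tauto)]

lemma occAMM_factor [Fintype S] [∀ i, Fintype (A i)] [∀ i, Fintype (Ω i)]
    [∀ i, Fintype (X i)]
    (T : S → (∀ i, A i) → S → ℝ) (μ0 : S → ℝ)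
    (Obs : ∀ i, S → Option (∀ j, A j) → Ω i) (γ : ℝ)
    (π : ∀ i, Ω i → X i → A i → ℝ)
    (Tx : ∀ i, Ω i → Option (X i) → X i → ℝ)
    (i : Fin n)
    (hπ : ∀ j, j ≠ i → ∀ o x, ∑ a : A j, π j o x a = 1)
    (hTx : ∀ j, j ≠ i → ∀ o xp, ∑ x : X j, Tx j o xp x = 1)
    (o : Ω i) (a : A i) (x : X i) (xp : Option (X i)) :
    occAMM T μ0 Obs γ π Tx i o a x xp
      = mval T μ0 Obs γ π Tx i o xp * (Tx i o xp x * π i o x a) := by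
  unfold occAMM mval
  rw [← tsum_mul_right]
  apply tsum_congr; intro t
  rw [key_sum T μ0 Obs π Tx i hπ hTx o a x xp t]; ring

lemma occ_marg_a [Fintype S] [∀ i, Fintype (A i)] [∀ i, Fintype (Ω i)]
    [∀ i, Fintype (X i)]
    (T : S → (∀ i, A i) → S → ℝ) (μ0 : S → ℝ)
    (Obs : ∀ i, S → Option (∀ j, A j) → Ω i) (γ : ℝ)
    (π : ∀ i, Ω i → X i → A i → ℝ)
    (Tx : ∀ i, Ω i → Option (X i) → X i → ℝ)
    (i : Fin n)
    (hπ : ∀ j o x, ∑ a : A j, π j o x a = 1)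
    (hTx : ∀ j o xp, ∑ x : X j, Tx j o xp x = 1)
    (o : Ω i) (x : X i) (xp : Option (X i)) :
    ∑ a : A i, occAMM T μ0 Obs γ π Tx i o a x xp
      = mval T μ0 Obs γ π Tx i o xp * Tx i o xp x := by
  have h : ∀ a : A i, occAMM T μ0 Obs γ π Tx i o a x xp
      = mval T μ0 Obs γ π Tx i o xp * (Tx i o xp x * π i o x a) :=
    fun a => occAMM_factor T μ0 Obs γ π Tx i (fun j _ => hπ j) (fun j _ => hTx j) o a x xp
  rw [Finset.sum_congr rfl (fun a _ => h a), ← Finset.mul_sum, ← Finset.mul_sum,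
    hπ i o x, mul_one]

lemma occ_marg_ax [Fintype S] [∀ i, Fintype (A i)] [∀ i, Fintype (Ω i)]
    [∀ i, Fintype (X i)]
    (T : S → (∀ i, A i) → S → ℝ) (μ0 : S → ℝ)
    (Obs : ∀ i, S → Option (∀ j, A j) → Ω i) (γ : ℝ)
    (π : ∀ i, Ω i → X i → A i → ℝ)
    (Tx : ∀ i, Ω i → Option (X i) → X i → ℝ)
    (i : Fin n)
    (hπ : ∀ j o x, ∑ a : A j, π j o x a = 1)
    (hTx : ∀ j o xp, ∑ x : X j, Tx j o xp x = 1)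
    (o : Ω i) (xp : Option (X i)) :
    ∑ a : A i, ∑ x : X i, occAMM T μ0 Obs γ π Tx i o a x xp
      = mval T μ0 Obs γ π Tx i o xp := by
  rw [Finset.sum_comm]
  rw [Finset.sum_congr rfl (fun x _ => occ_marg_a T μ0 Obs γ π Tx i hπ hTx o x xp),
    ← Finset.mul_sum, hTx i o xp, mul_one]

lemma occ_marg_xp [Fintype S] [∀ i, Fintype (A i)] [∀ i, Fintype (Ω i)]
    [∀ i, Fintype (X i)]
    (T : S → (∀ i, A i) → S → ℝ) (μ0 : S → ℝ)
    (Obs : ∀ i, S → Option (∀ j, A j) → Ω i) (γ : ℝ)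
    (π : ∀ i, Ω i → X i → A i → ℝ)
    (Tx : ∀ i, Ω i → Option (X i) → X i → ℝ)
    (i : Fin n)
    (hπ : ∀ j o x, ∑ a : A j, π j o x a = 1)
    (hTx : ∀ j o xp, ∑ x : X j, Tx j o xp x = 1)
    (o : Ω i) (x : X i) (a : A i) :
    ∑ xp : Option (X i), occAMM T μ0 Obs γ π Tx i o a x xp
      = (∑ xp : Option (X i), mval T μ0 Obs γ π Tx i o xp * Tx i o xp x) *
          π i o x a := by
  rw [Finset.sum_mul]
  apply Finset.sum_congr rfl; intro xp _
  rw [occAMM_factor T μ0 Obs γ π Tx i (fun j _ => hπ j) (fun j _ => hTx j) o a x xp]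
  ring

lemma occ_marg_xpa [Fintype S] [∀ i, Fintype (A i)] [∀ i, Fintype (Ω i)]
    [∀ i, Fintype (X i)]
    (T : S → (∀ i, A i) → S → ℝ) (μ0 : S → ℝ)
    (Obs : ∀ i, S → Option (∀ j, A j) → Ω i) (γ : ℝ)
    (π : ∀ i, Ω i → X i → A i → ℝ)
    (Tx : ∀ i, Ω i → Option (X i) → X i → ℝ)
    (i : Fin n)
    (hπ : ∀ j o x, ∑ a : A j, π j o x a = 1)
    (hTx : ∀ j o xp, ∑ x : X j, Tx j o xp x = 1)
    (o : Ω i) (x : X i) :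
    ∑ xp : Option (X i), ∑ a : A i, occAMM T μ0 Obs γ π Tx i o a x xp
      = ∑ xp : Option (X i), mval T μ0 Obs γ π Tx i o xp * Tx i o xp x := by
  apply Finset.sum_congr rfl; intro xp _
  exact occ_marg_a T μ0 Obs γ π Tx i hπ hTx o x xp

/-- **Theorem 1, bijection.** Fix an agent `i` and the other agents' models.
Let `ρ_i` be the AMM-occupancy measure induced by agent model `N_i = (π_i, Tx_i)` together
with the other agents' models, and assume its marginals `ρ_i(o,x⁻)` and `ρ_i(o,x)` are
strictly positive. Then `Tx_i` and `π_i` are recovered from `ρ_i` by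
`Tx_i(x|o,x⁻) = ∑_a ρ_i(o,a,x,x⁻) / ∑_{a,x} ρ_i(o,a,x,x⁻)` and
`π_i(a|o,x) = ∑_{x⁻} ρ_i(o,a,x,x⁻) / ∑_{x⁻,a} ρ_i(o,a,x,x⁻)`; moreover any other agent
model `(π_i', Tx_i')` which, combined with the same other-agent models, induces the same
AMM-occupancy measure satisfies `π_i' = π_i` and `Tx_i' = Tx_i`. -/
theorem occAMM_bijection
    {n : ℕ} {S : Type} {A : Fin n → Type} {Ω : Fin n → Type} {X : Fin n → Type}
    [Fintype S] [Nonempty S]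
    [∀ i, Fintype (A i)] [∀ i, Nonempty (A i)]
    [∀ i, Fintype (Ω i)] [∀ i, Nonempty (Ω i)]
    [∀ i, Fintype (X i)] [∀ i, Nonempty (X i)]
    (T : S → (∀ i, A i) → S → ℝ) (μ0 : S → ℝ)
    (Obs : ∀ i, S → Option (∀ j, A j) → Ω i) (γ : ℝ)
    (π : ∀ i, Ω i → X i → A i → ℝ)
    (Tx : ∀ i, Ω i → Option (X i) → X i → ℝ)
    (hT_nonneg : ∀ s a s', 0 ≤ T s a s') (hT_sum : ∀ s a, ∑ s' : S, T s a s' = 1)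
    (hμ0_nonneg : ∀ s, 0 ≤ μ0 s) (hμ0_sum : ∑ s : S, μ0 s = 1)
    (hγ0 : 0 < γ) (hγ1 : γ < 1)
    (hπ_nonneg : ∀ i o x a, 0 ≤ π i o x a)
    (hπ_sum : ∀ i o x, ∑ a : A i, π i o x a = 1)
    (hTx_nonneg : ∀ i o xp x, 0 ≤ Tx i o xp x)
    (hTx_sum : ∀ i o xp, ∑ x : X i, Tx i o xp x = 1)
    (i : Fin n)
    (hpos_oxp : ∀ (o : Ω i) (xp : Option (X i)),
      0 < ∑ a : A i, ∑ x : X i, occAMM T μ0 Obs γ π Tx i o a x xp)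
    (hpos_ox : ∀ (o : Ω i) (x : X i),
      0 < ∑ a : A i, ∑ xp : Option (X i), occAMM T μ0 Obs γ π Tx i o a x xp) :
    (∀ (o : Ω i) (x : X i) (xp : Option (X i)),
      Tx i o xp x
        = (∑ a : A i, occAMM T μ0 Obs γ π Tx i o a x xp) /
            (∑ a : A i, ∑ x' : X i, occAMM T μ0 Obs γ π Tx i o a x' xp)) ∧
    (∀ (o : Ω i) (x : X i) (a : A i),
      π i o x a
        = (∑ xp : Option (X i), occAMM T μ0 Obs γ π Tx i o a x xp) /
            (∑ xp : Option (X i), ∑ a' : A i, occAMM T μ0 Obs γ π Tx i o a' x xp)) ∧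
    (∀ (π' : ∀ j, Ω j → X j → A j → ℝ) (Tx' : ∀ j, Ω j → Option (X j) → X j → ℝ),
      (∀ j o x a, 0 ≤ π' j o x a) → (∀ j o x, ∑ a : A j, π' j o x a = 1) →
      (∀ j o xp x, 0 ≤ Tx' j o xp x) → (∀ j o xp, ∑ x : X j, Tx' j o xp x = 1) →
      (∀ j, j ≠ i → π' j = π j ∧ Tx' j = Tx j) →
      (∀ (o : Ω i) (a : A i) (x : X i) (xp : Option (X i)),
        occAMM T μ0 Obs γ π' Tx' i o a x xp = occAMM T μ0 Obs γ π Tx i o a x xp) →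
      π' i = π i ∧ Tx' i = Tx i) := by
  refine ⟨?_, ?_, ?_⟩
  · intro o x xp
    have hm := occ_marg_ax T μ0 Obs γ π Tx i hπ_sum hTx_sum o xp
    have hmpos : 0 < mval T μ0 Obs γ π Tx i o xp := hm ▸ hpos_oxp o xp
    rw [occ_marg_a T μ0 Obs γ π Tx i hπ_sum hTx_sum o x xp, hm]
    exact (mul_div_cancel_left₀ _ hmpos.ne').symm
  · intro o x a
    have hc := occ_marg_xpa T μ0 Obs γ π Tx i hπ_sum hTx_sum o x
    have hcpos : 0 < ∑ xp : Option (X i),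
        mval T μ0 Obs γ π Tx i o xp * Tx i o xp x := by
      have h := hpos_ox o x
      rw [Finset.sum_comm, hc] at h
      exact h
    rw [occ_marg_xp T μ0 Obs γ π Tx i hπ_sum hTx_sum o x a, hc]
    exact (mul_div_cancel_left₀ _ hcpos.ne').symm
  · intro π' Tx' hπ'0 hπ'1 hTx'0 hTx'1 hother heq
    have hmval' : ∀ (o : Ω i) (xp : Option (X i)),
        mval T μ0 Obs γ π' Tx' i o xp = mval T μ0 Obs γ π Tx i o xp := by
      intro o xp
      rw [← occ_marg_ax T μ0 Obs γ π' Tx' i hπ'1 hTx'1 o xp,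
        ← occ_marg_ax T μ0 Obs γ π Tx i hπ_sum hTx_sum o xp]
      exact Finset.sum_congr rfl fun a _ =>
        Finset.sum_congr rfl fun x _ => heq o a x xp
    have hTxeq : Tx' i = Tx i := by
      funext o xp x
      have hmpos : 0 < mval T μ0 Obs γ π Tx i o xp :=
        (occ_marg_ax T μ0 Obs γ π Tx i hπ_sum hTx_sum o xp) ▸ hpos_oxp o xp
      have h1 := occ_marg_a T μ0 Obs γ π' Tx' i hπ'1 hTx'1 o x xp
      have h2 := occ_marg_a T μ0 Obs γ π Tx i hπ_sum hTx_sum o x xp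
      rw [hmval'] at h1
      have h3 : mval T μ0 Obs γ π Tx i o xp * Tx' i o xp x
          = mval T μ0 Obs γ π Tx i o xp * Tx i o xp x := by
        rw [← h1, ← h2]
        exact Finset.sum_congr rfl fun a _ => heq o a x xp
      exact mul_left_cancel₀ hmpos.ne' h3
    refine ⟨?_, hTxeq⟩
    funext o x a
    have hc := occ_marg_xpa T μ0 Obs γ π Tx i hπ_sum hTx_sum o x
    have hcpos : 0 < ∑ xp : Option (X i),
        mval T μ0 Obs γ π Tx i o xp * Tx i o xp x := by
      have h := hpos_ox o x
      rw [Finset.sum_comm, hc] at h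
      exact h
    have h1 := occ_marg_xp T μ0 Obs γ π' Tx' i hπ'1 hTx'1 o x a
    have h2 := occ_marg_xp T μ0 Obs γ π Tx i hπ_sum hTx_sum o x a
    have hco : (∑ xp : Option (X i), mval T μ0 Obs γ π' Tx' i o xp * Tx' i o xp x)
        = ∑ xp : Option (X i), mval T μ0 Obs γ π Tx i o xp * Tx i o xp x := by
      exact Finset.sum_congr rfl fun xp _ => by rw [hmval', hTxeq]
    rw [hco] at h1
    have h3 : (∑ xp : Option (X i), mval T μ0 Obs γ π Tx i o xp * Tx i o xp x)
          * π' i o x a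
        = (∑ xp : Option (X i), mval T μ0 Obs γ π Tx i o xp * Tx i o xp x)
          * π i o x a := by
      rw [← h1, ← h2]
      exact Finset.sum_congr rfl fun xp _ => heq o a x xp
    exact mul_left_cancel₀ hcpos.ne' h3


end DecPOMDP
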